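/- arXiv:2002.07797 — 4 statements merged into one kernel-verified Lean document; each statement's English description precedes it below -/
import Mathlib

section
/- Fix 0 < p < 1 and define g(b) = 2p((1-p)/(1 - b(1-p)^2)^2 - 1/(b-1)^2). Then b_p := 1/(√(1-p)·(2-p-√(1-p))) satisfies g(b_p) = 0 and 1 < b_p < 1/(1-p)^2. -/
/-- `b_p = 1/(√(1-p)(2-p-√(1-p)))` is a root of the derivative
`g(b) = 2p((1-p)/(1-b(1-p)^2)^2 - 1/(b-1)^2)` and lies in `(1, 1/(1-p)^2)`. -/
theorem stmt_5 (p : ℝ) (hp0 : 0 < p) (hp1 : p < 1) :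
    let bp := 1 / (Real.sqrt (1 - p) * (2 - p - Real.sqrt (1 - p)))
    2 * p * ((1 - p) / (1 - bp * (1 - p) ^ 2) ^ 2 - 1 / (bp - 1) ^ 2) = 0 ∧
    1 < bp ∧ bp < 1 / (1 - p) ^ 2 := by
  intro bp
  have hs2 : Real.sqrt (1 - p) ^ 2 = 1 - p := Real.sq_sqrt (by linarith)
  set s := Real.sqrt (1 - p) with hs
  have hs0 : 0 < s := Real.sqrt_pos.mpr (by linarith)
  have hs1 : s < 1 := by nlinarith
  have hd0 : 0 < s * (2 - p - s) := by nlinarith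
  have hbp : bp = 1 / (s * (2 - p - s)) := rfl
  have hbp1 : 1 < bp := by
    rw [hbp, lt_div_iff₀ hd0]; nlinarith
  have hkey : 1 - bp * (1 - p) ^ 2 = s * (bp - 1) := by
    rw [hbp]; have h2 : 2 - p - s ≠ 0 := by nlinarith
    field_simp; nlinarith
  refine ⟨?_, hbp1, ?_⟩
  · rw [hkey]
    have h1 : bp - 1 ≠ 0 := by linarith
    field_simp
    linear_combination (-(2 * p)) * hs2
  · rw [hbp, div_lt_div_iff₀ hd0 (by nlinarith : (0:ℝ) < (1 - p) ^ 2)]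
    nlinarith
end

section
/- For 0 < p < 1, with b = 1/(√(1-p)·(2-p-√(1-p))), the value 2pb/(b-1) + 2pb(1-p)/(1 - b(1-p)^2) + p^2/(2-p) equals (4 + 4√(1-p))/(2-p) - p. -/
/-- With the optimal expansion factor `b`, the monotone competitive ratio equals
`(4 + 4√(1-p))/(2-p) - p`. -/
theorem stmt_6 (p : ℝ) (hp0 : 0 < p) (hp1 : p < 1) :
    let b := 1 / (Real.sqrt (1 - p) * (2 - p - Real.sqrt (1 - p)))
    2 * p * b / (b - 1) + 2 * p * b * (1 - p) / (1 - b * (1 - p) ^ 2) + p ^ 2 / (2 - p)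
      = (4 + 4 * Real.sqrt (1 - p)) / (2 - p) - p := by
  intro b
  set s := Real.sqrt (1 - p) with hs
  have hs0 : 0 < s := Real.sqrt_pos.mpr (by linarith)
  have hs2 : s ^ 2 = 1 - p := Real.sq_sqrt (by linarith)
  have hs1 : s < 1 := by nlinarith
  have hp : p = 1 - s ^ 2 := by linarith
  have hq : 0 < 1 + s ^ 2 - s := by nlinarith
  have hd : s * (2 - p - s) = s * (1 + s ^ 2 - s) := by rw [hp]; ring
  have hdp : 0 < s * (1 + s ^ 2 - s) := mul_pos hs0 hq
  have hb : b = 1 / (s * (1 + s ^ 2 - s)) := by unfold b; rw [hd]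
  have hb1 : b - 1 = (1 - s) * (1 + s ^ 2) / (s * (1 + s ^ 2 - s)) := by
    rw [hb]; field_simp; ring
  have hb2 : 1 - b * (1 - p) ^ 2 = (1 - s) * (1 + s ^ 2) / (1 + s ^ 2 - s) := by
    rw [hb, hp]; field_simp; ring
  have h1s : (0:ℝ) < 1 - s := by linarith
  have h1s2 : (0:ℝ) < 1 + s ^ 2 := by positivity
  have hn1 : b - 1 ≠ 0 := by rw [hb1]; positivity
  have hn2 : 1 - b * (1 - p) ^ 2 ≠ 0 := by rw [hb2]; positivity
  have h2p : 2 - p = 1 + s ^ 2 := by rw [hp]; ring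
  have hn3 : (2:ℝ) - p ≠ 0 := by rw [h2p]; positivity
  rw [hb1, hb2, hb, hp]
  have hn4 : (2:ℝ) - (1 - s ^ 2) ≠ 0 := by nlinarith
  have hn5 : s ≠ 0 := ne_of_gt hs0
  have hn6 : (1:ℝ) - s ≠ 0 := ne_of_gt h1s
  have hn7 : (1:ℝ) + s ^ 2 ≠ 0 := ne_of_gt h1s2
  have hn8 : (1:ℝ) + s ^ 2 - s ≠ 0 := ne_of_gt hq
  field_simp
  ring
end

section
/- For 0 < p < 1, the value R = √((p-2)(p-1)(p(p(4p-3)+5)+2)) + 4/(2-p) - (2-p)p satisfies the equation (1/2)·(R/(p-p^2) + (p-4)/(p^2-3p+2) - 4((p-1)p+2)(p-2)^2/(p(p(2p-9) - R + 12) + 2(R-4))) = 0. -/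
/-- The closed-form `1`-sub-monotone competitive ratio satisfies the defining equation. -/
theorem stmt_17 (p : ℝ) (hp0 : 0 < p) (hp1 : p < 1) :
    let R := Real.sqrt ((p - 2) * (p - 1) * (p * (p * (4 * p - 3) + 5) + 2))
      + 4 / (2 - p) - (2 - p) * p
    (1 / 2 : ℝ) * (R / (p - p ^ 2) + (p - 4) / (p ^ 2 - 3 * p + 2)
      - 4 * ((p - 1) * p + 2) * (p - 2) ^ 2
        / (p * (p * (2 * p - 9) - R + 12) + 2 * (R - 4))) = 0 := by
  intro R
  set s := Real.sqrt ((p - 2) * (p - 1) * (p * (p * (4 * p - 3) + 5) + 2)) with hsdef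
  have h2p : (0:ℝ) < 2 - p := by linarith
  have h1p : (0:ℝ) < 1 - p := by linarith
  have hq : (0:ℝ) < p ^ 2 - p + 2 := by nlinarith
  have hA : (0:ℝ) ≤ (p - 2) * (p - 1) * (p * (p * (4 * p - 3) + 5) + 2) := by
    nlinarith [mul_pos (mul_pos h2p h1p) hq, mul_pos (mul_pos hp0 hp0) hp0]
  have hs2 : s ^ 2 = (p - 2) * (p - 1) * (p * (p * (4 * p - 3) + 5) + 2) := Real.sq_sqrt hA
  have hsn : 0 ≤ s := Real.sqrt_nonneg _
  have hR : R = s + 4 / (2 - p) - (2 - p) * p := rfl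
  have hkey : (0:ℝ) < p * (p ^ 2 - p + 2) * ((1 - p) * (2 - p)) :=
    mul_pos (mul_pos hp0 hq) (mul_pos h1p h2p)
  have husq : ((1 - p) * (2 - p)) ^ 2 < s ^ 2 := by rw [hs2]; nlinarith [hkey]
  have hsu : (1 - p) * (2 - p) < s := lt_of_pow_lt_pow_left₀ 2 hsn husq
  have hD : p * (p * (2 * p - 9) - R + 12) + 2 * (R - 4) = (2 - p) * (s - (1 - p) * (2 - p)) := by
    rw [hR]; field_simp; ring
  have hD0 : ((2:ℝ) - p) * (s - (1 - p) * (2 - p)) ≠ 0 :=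
    ne_of_gt (mul_pos h2p (by linarith))
  have hp1' : p - p ^ 2 ≠ 0 := by nlinarith [mul_pos hp0 h1p]
  have hp2' : p ^ 2 - 3 * p + 2 ≠ 0 := by nlinarith [mul_pos h1p h2p]
  have hp3 : p * (p - 3) + 2 ≠ 0 := by nlinarith [mul_pos h1p h2p]
  have hD2 : s - (2 - p) * (1 - p) ≠ 0 := by nlinarith
  rw [hR, hD]
  field_simp
  ring_nf
  linear_combination (2 - p) * (p * (p - 3) + 2) * hs2
end

section
/- For all 0 < p < 1, the 1-sub-monotone competitive ratio R_1(p) = √((p-2)(p-1)(p(p(4p-3)+5)+2)) + 4/(2-p) - (2-p)p is strictly less than the optimal monotone competitive ratio R_0(p) = (4+4√(1-p))/(2-p) - p. -/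
/-- The `1`-sub-monotone competitive ratio is strictly smaller than the optimal
monotone competitive ratio, for every `p ∈ (0,1)`. -/
theorem stmt_18 (p : ℝ) (hp0 : 0 < p) (hp1 : p < 1) :
    Real.sqrt ((p - 2) * (p - 1) * (p * (p * (4 * p - 3) + 5) + 2))
      + 4 / (2 - p) - (2 - p) * p
    < (4 + 4 * Real.sqrt (1 - p)) / (2 - p) - p := by
  have h2p : 0 < 2 - p := by linarith
  set s := Real.sqrt (1 - p) with hs_def
  have hs1p : 0 ≤ 1 - p := by linarith
  have hs : s ^ 2 = 1 - p := Real.sq_sqrt hs1p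
  have hspos : 0 < s := Real.sqrt_pos.mpr (by linarith)
  have hslt1 : s < 1 := by nlinarith [hs, hspos]
  have hA : 0 ≤ (p - 2) * (p - 1) * (p * (p * (4 * p - 3) + 5) + 2) := by
    have h1 : 0 < (p - 2) * (p - 1) := by nlinarith
    have h2 : 0 < p * (p * (4 * p - 3) + 5) + 2 := by
      nlinarith [mul_pos hp0 hp0, mul_pos (mul_pos hp0 hp0) hp0]
    exact le_of_lt (mul_pos h1 h2)
  set t := Real.sqrt ((p - 2) * (p - 1) * (p * (p * (4 * p - 3) + 5) + 2)) with ht_def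
  have ht : t ^ 2 = (p - 2) * (p - 1) * (p * (p * (4 * p - 3) + 5) + 2) :=
    Real.sq_sqrt hA
  have ht0 : 0 ≤ t := Real.sqrt_nonneg _
  have hp_eq : p = 1 - s ^ 2 := by linarith
  have hH : 0 < 2 + 6*s + 7*s^2 + 8*s^3 + 9*s^4 + 8*s^5 + 7*s^6 + 6*s^7 + 4*s^8 + 2*s^9 + s^10 := by
    positivity
  have hrhs0 : 0 ≤ 4 * s + (2 - p) * (p * (1 - p)) := by
    have : 0 < p * (1 - p) := mul_pos hp0 (by linarith)
    nlinarith
  have hkey2 : ((2 - p) * t) ^ 2 < (4 * s + (2 - p) * (p * (1 - p))) ^ 2 := by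
    have hid : (4 * s + (2 - p) * (p * (1 - p))) ^ 2 - ((2 - p) * t) ^ 2
        = 4 * s^2 * (1 - s)^2 *
          (2 + 6*s + 7*s^2 + 8*s^3 + 9*s^4 + 8*s^5 + 7*s^6 + 6*s^7 + 4*s^8 + 2*s^9 + s^10) := by
      rw [mul_pow, ht, hp_eq]; ring
    have hpos : 0 < 4 * s^2 * (1 - s)^2 *
        (2 + 6*s + 7*s^2 + 8*s^3 + 9*s^4 + 8*s^5 + 7*s^6 + 6*s^7 + 4*s^8 + 2*s^9 + s^10) := by
      have h1 : 0 < (1 - s)^2 := pow_pos (by linarith) 2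
      have h2 : 0 < 4 * s^2 := by positivity
      exact mul_pos (mul_pos h2 h1) hH
    linarith
  have key : (2 - p) * t < 4 * s + (2 - p) * (p * (1 - p)) :=
    lt_of_pow_lt_pow_left₀ 2 hrhs0 hkey2
  have h4 : t - p * (1 - p) < 4 * s / (2 - p) := by
    rw [lt_div_iff₀ h2p]; nlinarith [key]
  have hrw : (4 + 4 * s) / (2 - p) = 4 / (2 - p) + 4 * s / (2 - p) := by ring
  rw [hrw]
  nlinarith [h4]
end
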